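/- Let α < 0 be a real number and let x_1, x_2, x_3 be binary variables taking values in {0,1} (regarded as real numbers). Then α·x_1·x_2·x_3 = min_{w ∈ {0,1}} |α|·w·(2 − x_1 − x_2 − x_3); in particular, for every w ∈ {0,1}, α·x_1·x_2·x_3 ≤ |α|·w·(2 − x_1 − x_2 − x_3). -/

import Mathlib

lemma fin2_inf' (f : Fin 2 → ℝ) :
    Finset.univ.inf' Finset.univ_nonempty f = min (f 0) (f 1) := by
  apply le_antisymm
  · exact le_min (Finset.inf'_le _ (Finset.mem_univ _)) (Finset.inf'_le _ (Finset.mem_univ _))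
  · apply Finset.le_inf'
    intro b _
    fin_cases b
    · exact min_le_left _ _
    · exact min_le_right _ _

/-- Freedman reduction of a cubic term with negative coefficient:
    α·x₁x₂x₃ = min_{w ∈ {0,1}} |α|·w·(2 − x₁ − x₂ − x₃),
    and in particular ≤ holds for every w ∈ {0,1}. -/
theorem cubic_reduction_neg (α : ℝ) (hα : α < 0) (x1 x2 x3 : ℝ)
    (h1 : x1 = 0 ∨ x1 = 1) (h2 : x2 = 0 ∨ x2 = 1) (h3 : x3 = 0 ∨ x3 = 1) :
    (α * x1 * x2 * x3 =
      Finset.univ.inf' Finset.univ_nonempty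
        (fun w : Fin 2 => |α| * ((w : ℕ) : ℝ) * (2 - x1 - x2 - x3))) ∧
    ∀ w : ℝ, (w = 0 ∨ w = 1) →
      α * x1 * x2 * x3 ≤ |α| * w * (2 - x1 - x2 - x3) := by
  have ha : |α| = -α := abs_of_neg hα
  rw [fin2_inf']
  rcases h1 with h1 | h1 <;> rcases h2 with h2 | h2 <;> rcases h3 with h3 | h3 <;>
    subst h1 <;> subst h2 <;> subst h3 <;>
    refine ⟨?_, ?_⟩ <;>
    first
      | (rintro w (rfl | rfl) <;> simp [ha] <;> nlinarith)
      | (simp only [min_def, ha]; norm_num; try (intro h; linarith); try split <;> linarith)
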